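/- For positive constants α, β_φ, β_ρ and p ≥ 1, the eigenvalues λ±_k of the mode-k Hasegawa–Wakatani linearization satisfy λ⁺_k/K^p → −min(β_φ, β_ρ) and λ⁻_k/K^p → −max(β_φ, β_ρ) as K = k_x² + k_y² → ∞ along modes with fixed k_y, where λ±_k = ((a+d) ± sqrt((a+d)² − 4(ad−bc)))/2 with a = −α/K − β_φ K^p, d = −α − β_ρ K^p, bc = (α/K)(α − i k_y κ). -/

import Mathlib

open Filter

private lemma cpow_half_ofReal {x : ℝ} (hx : 0 ≤ x) :
    (x : ℂ) ^ ((1 : ℂ) / 2) = (Real.sqrt x : ℂ) := by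
  rw [show ((1 : ℂ) / 2) = (((1 / 2 : ℝ) : ℝ) : ℂ) by norm_num,
    ← Complex.ofReal_cpow hx, Real.sqrt_eq_rpow]

private lemma div_helper_plus (x y s t : ℂ) (ht : t ≠ 0) :
    (x + y + t * s) / 2 / t = (x / t + y / t + s) / 2 := by
  field_simp

private lemma div_helper_minus (x y s t : ℂ) (ht : t ≠ 0) :
    (x + y - t * s) / 2 / t = (x / t + y / t - s) / 2 := by
  field_simp

private lemma mul_cpow_half {x : ℝ} (hx : 0 < x) (z : ℂ) :
    ((x : ℂ) * z) ^ ((1 : ℂ) / 2) = (Real.sqrt x : ℂ) * z ^ ((1 : ℂ) / 2) := by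
  rw [← cpow_half_ofReal hx.le]
  rcases eq_or_ne z 0 with rfl | hz
  · simp [Complex.zero_cpow (show ((1 : ℂ) / 2) ≠ 0 by norm_num)]
  · have hx' : (x : ℂ) ≠ 0 := Complex.ofReal_ne_zero.mpr hx.ne'
    rw [Complex.cpow_def_of_ne_zero (mul_ne_zero hx' hz),
      Complex.log_ofReal_mul hx hz, Complex.ofReal_log hx.le, add_mul,
      Complex.exp_add, ← Complex.cpow_def_of_ne_zero hx',
      ← Complex.cpow_def_of_ne_zero hz]

/-- As K → ∞ (with k_y fixed), λ⁺_k/K^p → −min(β_φ,β_ρ) and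
λ⁻_k/K^p → −max(β_φ,β_ρ), where λ± are given by the quadratic formula with principal
square root, a = −α/K − β_φK^p, d = −α − β_ρK^p, bc = (α/K)(α − i k_y κ). -/
theorem hw_eigenvalue_asymptotics (alpha bphi brho kappa : ℝ)
    (halpha : 0 < alpha) (hbphi : 0 < bphi) (hbrho : 0 < brho) (hkappa : 0 < kappa)
    (p : ℕ) (hp : 1 ≤ p) (ky : ℤ)
    (a d : ℝ → ℂ) (bc : ℝ → ℂ) (lamp lamm : ℝ → ℂ)
    (ha : ∀ K : ℝ, a K = ((-(alpha / K) - bphi * K ^ p : ℝ) : ℂ))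
    (hd : ∀ K : ℝ, d K = ((-alpha - brho * K ^ p : ℝ) : ℂ))
    (hbc : ∀ K : ℝ, bc K = ((alpha / K : ℝ) : ℂ) * ((alpha : ℂ) - Complex.I * (ky : ℂ) * (kappa : ℂ)))
    (hlamp : ∀ K : ℝ, lamp K =
      ((a K + d K) + ((a K + d K) ^ 2 - 4 * (a K * d K - bc K)) ^ ((1 : ℂ) / 2)) / 2)
    (hlamm : ∀ K : ℝ, lamm K =
      ((a K + d K) - ((a K + d K) ^ 2 - 4 * (a K * d K - bc K)) ^ ((1 : ℂ) / 2)) / 2) :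
    Tendsto (fun K : ℝ => lamp K / ((K : ℂ) ^ p)) atTop (nhds ((-(min bphi brho) : ℝ) : ℂ)) ∧
    Tendsto (fun K : ℝ => lamm K / ((K : ℂ) ^ p)) atTop (nhds ((-(max bphi brho) : ℝ) : ℂ)) := by
  have hp0 : p ≠ 0 := by omega
  have hKp : Tendsto (fun K : ℝ => K ^ p) atTop atTop := tendsto_pow_atTop hp0
  have hKKp : Tendsto (fun K : ℝ => K * K ^ p) atTop atTop :=
    tendsto_id.atTop_mul_atTop₀ hKp
  have hKKp2 : Tendsto (fun K : ℝ => K * (K ^ p * K ^ p)) atTop atTop :=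
    tendsto_id.atTop_mul_atTop₀ (hKp.atTop_mul_atTop₀ hKp)
  have ofR : ∀ {f : ℝ → ℝ} {c : ℝ}, Tendsto f atTop (nhds c) →
      Tendsto (fun K : ℝ => ((f K : ℝ) : ℂ)) atTop (nhds ((c : ℝ) : ℂ)) :=
    fun h => (Complex.continuous_ofReal.tendsto _).comp h
  have hmem : ∀ᶠ K : ℝ in atTop, (1 : ℝ) ≤ K := eventually_ge_atTop 1
  -- a K / K^p → -bphi
  have hA : Tendsto (fun K : ℝ => a K / (K : ℂ) ^ p) atTop (nhds ((-bphi : ℝ) : ℂ)) := by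
    have h1 : Tendsto (fun K : ℝ => -(alpha / (K * K ^ p)) - bphi) atTop (nhds (-bphi)) := by
      simpa using ((tendsto_const_nhds.div_atTop hKKp).neg.sub
        (tendsto_const_nhds : Tendsto (fun _ : ℝ => bphi) atTop (nhds bphi)))
    refine Tendsto.congr' ?_ (ofR h1)
    filter_upwards [hmem] with K hK
    have hK0 : (0 : ℝ) < K := by linarith
    have hKc : (K : ℂ) ≠ 0 := by exact_mod_cast hK0.ne'
    rw [ha K]; push_cast; field_simp
  -- d K / K^p → -brho
  have hDd : Tendsto (fun K : ℝ => d K / (K : ℂ) ^ p) atTop (nhds ((-brho : ℝ) : ℂ)) := by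
    have h1 : Tendsto (fun K : ℝ => -(alpha / K ^ p) - brho) atTop (nhds (-brho)) := by
      simpa using ((tendsto_const_nhds.div_atTop hKp).neg.sub
        (tendsto_const_nhds : Tendsto (fun _ : ℝ => brho) atTop (nhds brho)))
    refine Tendsto.congr' ?_ (ofR h1)
    filter_upwards [hmem] with K hK
    have hK0 : (0 : ℝ) < K := by linarith
    have hKc : (K : ℂ) ≠ 0 := by exact_mod_cast hK0.ne'
    rw [hd K]; push_cast; field_simp
  -- bc K / (K^p)^2 → 0
  have hB : Tendsto (fun K : ℝ => bc K / ((K : ℂ) ^ p) ^ 2) atTop (nhds 0) := by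
    have h1 : Tendsto (fun K : ℝ => alpha / (K * (K ^ p * K ^ p))) atTop (nhds 0) :=
      tendsto_const_nhds.div_atTop hKKp2
    have h2 := (ofR h1).mul_const ((alpha : ℂ) - Complex.I * (ky : ℂ) * (kappa : ℂ))
    simp only [Complex.ofReal_zero, zero_mul] at h2
    refine Tendsto.congr' ?_ h2
    filter_upwards [hmem] with K hK
    have hK0 : (0 : ℝ) < K := by linarith
    have hKc : (K : ℂ) ≠ 0 := by exact_mod_cast hK0.ne'
    rw [hbc K]; push_cast; rw [sq]; field_simp
  -- the rescaled discriminant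
  set V : ℝ → ℂ := fun K =>
    (a K / (K : ℂ) ^ p + d K / (K : ℂ) ^ p) ^ 2 -
      4 * ((a K / (K : ℂ) ^ p) * (d K / (K : ℂ) ^ p) - bc K / ((K : ℂ) ^ p) ^ 2) with hVdef
  have hV : Tendsto V atTop (nhds (((bphi - brho) ^ 2 : ℝ) : ℂ)) := by
    have h1 := ((hA.add hDd).pow 2).sub (((hA.mul hDd).sub hB).const_mul 4)
    convert h1 using 1
    push_cast; ring
  have hsqrt : Tendsto (fun K => V K ^ ((1 : ℂ) / 2)) atTop
      (nhds ((|bphi - brho| : ℝ) : ℂ)) := by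
    have hcont : ContinuousAt (fun z : ℂ => z ^ ((1 : ℂ) / 2))
        (((bphi - brho) ^ 2 : ℝ) : ℂ) := by
      apply Complex.continuousAt_cpow_const_of_re_pos
      · left; simp only [Complex.ofReal_re]; positivity
      · norm_num
    have h2 := hcont.tendsto.comp hV
    rwa [Function.comp_def, cpow_half_ofReal (sq_nonneg _), Real.sqrt_sq_eq_abs] at h2
  -- key eventual identities
  have hkeyp : ∀ᶠ K : ℝ in atTop, lamp K / (K : ℂ) ^ p =
      (a K / (K : ℂ) ^ p + d K / (K : ℂ) ^ p + V K ^ ((1 : ℂ) / 2)) / 2 ∧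
      lamm K / (K : ℂ) ^ p =
      (a K / (K : ℂ) ^ p + d K / (K : ℂ) ^ p - V K ^ ((1 : ℂ) / 2)) / 2 := by
    filter_upwards [hmem] with K hK
    have hK0 : (0 : ℝ) < K := by linarith
    have hxp : (0 : ℝ) < K ^ p := pow_pos hK0 p
    have hKne : (K : ℂ) ≠ 0 := by exact_mod_cast hK0.ne'
    have hKc : (K : ℂ) ^ p ≠ 0 := pow_ne_zero _ hKne
    have hKpc : (K : ℂ) ^ p = ((K ^ p : ℝ) : ℂ) := by push_cast; ring
    have hcast : (((K ^ p) ^ 2 : ℝ) : ℂ) = ((K : ℂ) ^ p) ^ 2 := by push_cast; ring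
    have hDisc : (a K + d K) ^ 2 - 4 * (a K * d K - bc K) =
        (((K ^ p) ^ 2 : ℝ) : ℂ) * V K := by
      simp only [hVdef]; rw [hcast]; field_simp
    have hsq : ((a K + d K) ^ 2 - 4 * (a K * d K - bc K)) ^ ((1 : ℂ) / 2) =
        ((K ^ p : ℝ) : ℂ) * V K ^ ((1 : ℂ) / 2) := by
      rw [hDisc, mul_cpow_half (by positivity) (V K), Real.sqrt_sq hxp.le]
    constructor
    · rw [hlamp K, hsq, ← hKpc]
      exact div_helper_plus _ _ _ _ hKc
    · rw [hlamm K, hsq, ← hKpc]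
      exact div_helper_minus _ _ _ _ hKc
  have habs : ∀ s : ℝ, ((-bphi : ℝ) : ℂ) + ((-brho : ℝ) : ℂ) + s = ((-bphi - brho + s : ℝ) : ℂ) := by
    intro s; push_cast; ring
  constructor
  · have h1 := ((hA.add hDd).add hsqrt).div_const 2
    refine Tendsto.congr' (by filter_upwards [hkeyp] with K hK using hK.1.symm) ?_
    convert h1 using 2
    rcases le_total bphi brho with h | h
    · rw [min_eq_left h, abs_of_nonpos (by linarith)]; push_cast; ring
    · rw [min_eq_right h, abs_of_nonneg (by linarith)]; push_cast; ring
  · have h1 := ((hA.add hDd).sub hsqrt).div_const 2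
    refine Tendsto.congr' (by filter_upwards [hkeyp] with K hK using hK.2.symm) ?_
    convert h1 using 2
    rcases le_total bphi brho with h | h
    · rw [max_eq_right h, abs_of_nonpos (by linarith)]; push_cast; ring
    · rw [max_eq_left h, abs_of_nonneg (by linarith)]; push_cast; ring
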